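/- (Deficient sequence completion) Let m ≥ 2 be a deficient natural number with largest prime factor P, and suppose c(m) ≥ P (i.e., σ(m) ≥ P·d(m)). Then there exist primes p, q with P < p < q such that m·p is deficient and m·p·q is abundant. Moreover, if m is squarefree, then m·p·q is primitive abundant. -/

import Mathlib

/-- The sum of all divisors of `n`. -/
def sigma1 (n : ℕ) : ℕ := ∑ d ∈ n.divisors, d

/-- `n` is abundant if `σ(n) > 2n`. -/
def Abundant (n : ℕ) : Prop := 2 * n < sigma1 n

/-- `n` is deficient if `σ(n) < 2n`. -/
def Deficient (n : ℕ) : Prop := sigma1 n < 2 * n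

/-- A primitive abundant number: abundant and all proper divisors deficient. -/
def PrimitiveAbundant (n : ℕ) : Prop :=
  Abundant n ∧ ∀ d ∈ n.properDivisors, Deficient d

/-- The center of a deficient number `m`: `c(m) = σ(m)/d(m)` where `d(m) = 2m - σ(m)`. -/
def center (n : ℕ) : ℚ := (sigma1 n : ℚ) / (2 * (n : ℚ) - (sigma1 n : ℚ))


section AuxPAN

lemma sigma1_mul {a b : ℕ} (h : Nat.Coprime a b) :
    sigma1 (a * b) = sigma1 a * sigma1 b := h.sum_divisors_mul
lemma sigma1_prime {p : ℕ} (hp : p.Prime) : sigma1 p = p + 1 := by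
  rw [sigma1, hp.divisors, Finset.sum_pair hp.one_lt.ne]; omega
lemma sigma1_mul_le {a k : ℕ} (ha : a ≠ 0) (hk : k ≠ 0) :
    sigma1 a * k ≤ sigma1 (a * k) := by
  have hsub : a.divisors.image (· * k) ⊆ (a * k).divisors := by
    intro x hx
    obtain ⟨e, he, rfl⟩ := Finset.mem_image.mp hx
    exact Nat.mem_divisors.mpr ⟨mul_dvd_mul (Nat.dvd_of_mem_divisors he) dvd_rfl,
      mul_ne_zero ha hk⟩
  calc sigma1 a * k = ∑ e ∈ a.divisors, e * k := by rw [sigma1, Finset.sum_mul]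
    _ = ∑ x ∈ a.divisors.image (· * k), x :=
      (Finset.sum_image (f := fun x => x) (fun x _ y _ h =>
        Nat.eq_of_mul_eq_mul_right (Nat.pos_of_ne_zero hk) h)).symm
    _ ≤ sigma1 (a * k) := Finset.sum_le_sum_of_subset hsub

lemma deficient_of_dvd {t b : ℕ} (hb : b ≠ 0) (ht : t ∣ b) (hd : Deficient b) :
    Deficient t := by
  obtain ⟨k, rfl⟩ := ht
  have ht0 : t ≠ 0 := by rintro rfl; simp at hb
  have hk0 : k ≠ 0 := by rintro rfl; simp at hb
  have h2 : sigma1 t * k < 2 * t * k := by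
    calc sigma1 t * k ≤ sigma1 (t * k) := sigma1_mul_le ht0 hk0
      _ < 2 * (t * k) := hd
      _ = 2 * t * k := by ring
  exact Nat.lt_of_mul_lt_mul_right h2

section RealPart
open Real

theorem my_real_main_inequality {x : ℝ} (x_large : (512 : ℝ) ≤ x) :
    2 * x ^ 2 * (2 * x) ^ √(2 * x) * 4 ^ (2 * x / 3) ≤ 4 ^ x := by
  let f : ℝ → ℝ := fun x => log 2 + log x + log x + √(2 * x) * log (2 * x) - log 4 / 3 * x
  have hf' : ∀ x, 0 < x → 0 < 2 * x ^ 2 * (2 * x) ^ √(2 * x) / 4 ^ (x / 3) := fun x h => by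
    positivity
  have hf : ∀ x, 0 < x → f x = log (2 * x ^ 2 * (2 * x) ^ √(2 * x) / 4 ^ (x / 3)) := by
    intro x h5
    have h6 := mul_pos (zero_lt_two' ℝ) h5
    have h7 := rpow_pos_of_pos h6 (√(2 * x))
    rw [log_div (by positivity) (rpow_pos_of_pos four_pos _).ne',
      log_mul (by positivity) h7.ne', log_mul two_ne_zero (by positivity),
      log_pow, log_rpow h6, log_rpow zero_lt_four]
    simp only [f]
    push_cast
    ring
  have h5 : 0 < x := lt_of_lt_of_le (by norm_num1) x_large
  rw [← div_le_one (rpow_pos_of_pos four_pos x), ← div_div_eq_mul_div, ← rpow_sub four_pos, ←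
    mul_div 2 x, mul_div_left_comm, ← mul_one_sub, (by norm_num1 : (1 : ℝ) - 2 / 3 = 1 / 3),
    mul_one_div, ← log_nonpos_iff (hf' x h5).le, ← hf x h5]
  have h : ConcaveOn ℝ (Set.Ioi 0.5) f := by
    have hlog : ConcaveOn ℝ (Set.Ioi (0.5 : ℝ)) log :=
      strictConcaveOn_log_Ioi.concaveOn.subset (Set.Ioi_subset_Ioi (by norm_num))
        (convex_Ioi 0.5)
    apply ConcaveOn.sub
    · apply ConcaveOn.add
      · apply ConcaveOn.add
        · apply ConcaveOn.add
          · exact concaveOn_const _ (convex_Ioi 0.5)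
          · exact hlog
        · exact hlog
      convert ((strictConcaveOn_sqrt_mul_log_Ioi.concaveOn.comp_linearMap
        ((2 : ℝ) • LinearMap.id))) using 1
      case e'_9 => rfl
      case e'_7 => rfl
      case e'_12 => rfl
      ext x
      simp only [Set.mem_Ioi, Set.mem_preimage, LinearMap.smul_apply,
        LinearMap.id_coe, id_eq, smul_eq_mul]
      rw [← mul_lt_mul_iff_right₀ (two_pos)]
      norm_num1
      rfl
    apply ConvexOn.smul
    · refine div_nonneg (log_nonneg (by norm_num1)) (by norm_num1)
    · exact convexOn_id (convex_Ioi (0.5 : ℝ))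
  suffices ∃ x1 x2, 0.5 < x1 ∧ x1 < x2 ∧ x2 ≤ x ∧ 0 ≤ f x1 ∧ f x2 ≤ 0 by
    obtain ⟨x1, x2, h1, h2, h0, h3, h4⟩ := this
    exact (h.right_le_of_le_left'' h1 ((h1.trans h2).trans_le h0) h2 h0 (h4.trans h3)).trans h4
  refine ⟨18, 512, by norm_num1, by norm_num1, x_large, ?_, ?_⟩
  · have hs : √(2 * 18 : ℝ) = 6 := (sqrt_eq_iff_mul_self_eq_of_pos (by norm_num1)).mpr
      (by norm_num1)
    rw [hf _ (by norm_num1), log_nonneg_iff (hf' _ (by norm_num1)), hs,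
      one_le_div (by norm_num1)]
    rw [show ((18 : ℝ) / 3) = ((6 : ℕ) : ℝ) by norm_num, rpow_natCast,
      show (6 : ℝ) = ((6 : ℕ) : ℝ) by norm_num, rpow_natCast]
    norm_num
  · have hs : √(2 * 512 : ℝ) = 32 := (sqrt_eq_iff_mul_self_eq_of_pos (by norm_num1)).mpr
      (by norm_num1)
    rw [hf _ (by norm_num1), log_nonpos_iff (hf' _ (by norm_num1)).le, hs,
      div_le_one (by positivity)]
    have hr : (4 : ℝ) ^ ((512 : ℝ) / 3) = (2 : ℝ) ^ ((1024 : ℝ) / 3) := by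
      rw [show (4 : ℝ) = (2 : ℝ) ^ (((2 : ℕ) : ℝ)) by rw [rpow_natCast]; norm_num,
        ← rpow_mul (by norm_num : (0 : ℝ) ≤ 2)]
      norm_num
    rw [hr, show (32 : ℝ) = ((32 : ℕ) : ℝ) by norm_num, rpow_natCast]
    calc (2 : ℝ) * 512 ^ 2 * (2 * 512) ^ (32 : ℕ) = (2 : ℝ) ^ (339 : ℕ) := by norm_cast
      _ = (2 : ℝ) ^ (((339 : ℕ) : ℝ)) := (rpow_natCast 2 339).symm
      _ ≤ (2 : ℝ) ^ ((1024 : ℝ) / 3) :=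
          rpow_le_rpow_of_exponent_le one_le_two (by norm_num)

end RealPart

section NatPart
open Nat

theorem my_main_inequality {n : ℕ} (n_large : 512 ≤ n) :
    2 * n ^ 2 * (2 * n) ^ Nat.sqrt (2 * n) * 4 ^ (2 * n / 3) ≤ 4 ^ n := by
  have hn1 : (1:ℝ) ≤ 2 * (n:ℝ) := by
    have : (1:ℝ) ≤ (n:ℝ) := by exact_mod_cast Nat.one_le_iff_ne_zero.mpr (by omega)
    linarith
  have A : ((2 * n : ℕ) : ℝ) ^ (Nat.sqrt (2 * n)) ≤ (2 * (n:ℝ)) ^ Real.sqrt (2 * (n:ℝ)) := by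
    push_cast
    rw [← Real.rpow_natCast (2 * (n:ℝ)) (Nat.sqrt (2 * n))]
    apply Real.rpow_le_rpow_of_exponent_le hn1
    have := Real.nat_sqrt_le_real_sqrt (a := 2 * n)
    push_cast at this ⊢
    exact this
  have B : ((4:ℝ)) ^ ((2 * n / 3 : ℕ)) ≤ (4:ℝ) ^ (2 * (n:ℝ) / 3) := by
    rw [← Real.rpow_natCast (4:ℝ) (2 * n / 3)]
    apply Real.rpow_le_rpow_of_exponent_le (by norm_num)
    calc ((2 * n / 3 : ℕ) : ℝ) ≤ ((2 * n : ℕ) : ℝ) / 3 := Nat.cast_div_le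
      _ = 2 * (n:ℝ) / 3 := by push_cast; ring
  have C : ((2 * n ^ 2 * (2 * n) ^ Nat.sqrt (2 * n) * 4 ^ (2 * n / 3) : ℕ) : ℝ)
      ≤ 2 * (n:ℝ) ^ 2 * (2 * (n:ℝ)) ^ Real.sqrt (2 * (n:ℝ)) * 4 ^ (2 * (n:ℝ) / 3) := by
    push_cast
    have hA : (0:ℝ) ≤ 2 * (n:ℝ) ^ 2 := by positivity
    have h2 : ((2:ℝ) * n) ^ (Nat.sqrt (2*n) : ℕ) ≤ (2 * (n:ℝ)) ^ Real.sqrt (2 * (n:ℝ)) := by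
      have := A; push_cast at this; exact this
    refine mul_le_mul (mul_le_mul le_rfl h2 (by positivity) hA) B (by positivity) ?_
    positivity
  rw [← @Nat.cast_le ℝ]
  refine C.trans ?_
  have := my_real_main_inequality (x := (n:ℝ)) (by exact_mod_cast n_large)
  refine this.trans ?_
  rw [Real.rpow_natCast]
  exact_mod_cast le_rfl

theorem prod_small_le (n : ℕ) (n_large : 2 < n) :
    (∏ p ∈ Finset.range (2 * n / 3 + 1), p ^ (centralBinom n).factorization p) ≤
      (2 * n) ^ Nat.sqrt (2 * n) * 4 ^ (2 * n / 3) := by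
  have n_pos : 0 < n := (Nat.zero_le _).trans_lt n_large
  have n2_pos : 1 ≤ 2 * n := mul_pos (zero_lt_two' ℕ) n_pos
  let S := (Finset.range (2 * n / 3 + 1)).filter Nat.Prime
  let f x := x ^ n.centralBinom.factorization x
  have hprodeq : ∏ x ∈ S, f x = ∏ x ∈ Finset.range (2 * n / 3 + 1), f x := by
    refine Finset.prod_filter_of_ne fun p _ h => ?_
    contrapose! h; dsimp only [f]
    rw [factorization_eq_zero_of_not_prime n.centralBinom h, _root_.pow_zero]
  rw [show (∏ p ∈ Finset.range (2 * n / 3 + 1), p ^ (centralBinom n).factorization p)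
      = ∏ x ∈ Finset.range (2 * n / 3 + 1), f x from rfl, ← hprodeq,
    ← Finset.prod_filter_mul_prod_filter_not S (· ≤ Nat.sqrt (2 * n))]
  apply mul_le_mul'
  · refine (Finset.prod_le_prod' fun p _ => (?_ : f p ≤ 2 * n)).trans ?_
    · exact pow_factorization_choose_le (mul_pos two_pos n_pos)
    have : (Finset.Icc 1 (Nat.sqrt (2 * n))).card = Nat.sqrt (2 * n) := by
      rw [Nat.card_Icc, Nat.add_sub_cancel]
    rw [Finset.prod_const]
    refine pow_right_mono₀ n2_pos ((Finset.card_le_card fun x hx => ?_).trans this.le)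
    obtain ⟨h1, h2⟩ := Finset.mem_filter.1 hx
    exact Finset.mem_Icc.mpr ⟨(Finset.mem_filter.1 h1).2.one_lt.le, h2⟩
  · refine le_trans ?_ (primorial_le_4_pow (2 * n / 3))
    refine (Finset.prod_le_prod' fun p hp => (?_ : f p ≤ p)).trans ?_
    · obtain ⟨h1, h2⟩ := Finset.mem_filter.1 hp
      refine (pow_right_mono₀ (Finset.mem_filter.1 h1).2.one_lt.le ?_).trans (pow_one p).le
      exact Nat.factorization_choose_le_one (sqrt_lt'.mp <| not_le.1 h2)
    refine Finset.prod_le_prod_of_subset_of_one_le' (Finset.filter_subset _ _) ?_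
    exact fun p hp _ => (Finset.mem_filter.1 hp).2.one_lt.le

theorem centralBinom_le_of_one_prime (n : ℕ) (n_large : 2 < n) (p₀ : ℕ)
    (hp₀ : p₀.Prime) (hnp₀ : n < p₀) (hp₀2n : p₀ ≤ 2 * n)
    (huniq : ∀ x : ℕ, x.Prime → n < x → x ≤ 2 * n → x = p₀) :
    centralBinom n ≤ 2 * n * ((2 * n) ^ Nat.sqrt (2 * n) * 4 ^ (2 * n / 3)) := by
  have hsplit : centralBinom n =
      p₀ ^ (centralBinom n).factorization p₀ *
        ∏ p ∈ Finset.range (2 * n / 3 + 1), p ^ (centralBinom n).factorization p := by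
    have hnotmem : p₀ ∉ Finset.range (2 * n / 3 + 1) := by
      rw [Finset.mem_range]
      omega
    conv_lhs => rw [← n.prod_pow_factorization_centralBinom]
    rw [← Finset.prod_insert (f := fun p => p ^ (centralBinom n).factorization p) hnotmem]
    apply (Finset.prod_subset ?_ ?_).symm
    · intro x hx
      rw [Finset.mem_insert, Finset.mem_range] at hx
      rw [Finset.mem_range]
      rcases hx with rfl | hx <;> omega
    · intro x hx hxn
      rw [Finset.mem_range] at hx
      rw [Finset.mem_insert, Finset.mem_range, not_or] at hxn
      obtain ⟨hne, hge⟩ := hxn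
      by_cases hxp : x.Prime
      · rcases le_or_gt x n with hle | hgt
        · rw [factorization_centralBinom_of_two_mul_self_lt_three_mul n_large hle (by omega),
            Nat.pow_zero]
        · exact absurd (huniq x hxp hgt (by omega)) hne
      · rw [factorization_eq_zero_of_not_prime _ hxp, Nat.pow_zero]
  rw [hsplit]
  have h1 : p₀ ^ (centralBinom n).factorization p₀ ≤ 2 * n := by
    have : centralBinom n = (2 * n).choose n := centralBinom_eq_two_mul_choose n
    rw [this]
    exact pow_factorization_choose_le (by omega)
  exact Nat.mul_le_mul h1 (prod_small_le n n_large)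

def TwoPrimes (n : ℕ) : Prop :=
  ∃ p q : ℕ, p.Prime ∧ q.Prime ∧ n < p ∧ p < q ∧ q ≤ 2 * n

theorem twoPrimes_eventually {n : ℕ} (h : 512 ≤ n) : TwoPrimes n := by
  by_contra htp
  obtain ⟨p₀, hp₀, hnp₀, hp₀2n⟩ := Nat.exists_prime_lt_and_le_two_mul n (by omega)
  have huniq : ∀ x : ℕ, x.Prime → n < x → x ≤ 2 * n → x = p₀ := by
    intro x hx hnx hx2n
    by_contra hne
    rcases Ne.lt_or_gt hne with h' | h'
    · exact htp ⟨x, p₀, hx, hp₀, hnx, h', hp₀2n⟩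
    · exact htp ⟨p₀, x, hp₀, hx, hnp₀, h', hx2n⟩
  have H1 : 2 * n ^ 2 * (2 * n) ^ Nat.sqrt (2 * n) * 4 ^ (2 * n / 3) ≤ 4 ^ n :=
    my_main_inequality h
  have H2 : 4 ^ n < n * centralBinom n :=
    Nat.four_pow_lt_mul_centralBinom n (by omega)
  have H3 : centralBinom n ≤ 2 * n * ((2 * n) ^ Nat.sqrt (2 * n) * 4 ^ (2 * n / 3)) :=
    centralBinom_le_of_one_prime n (by omega) p₀ hp₀ hnp₀ hp₀2n huniq
  have : n * centralBinom n ≤ 2 * n ^ 2 * (2 * n) ^ Nat.sqrt (2 * n) * 4 ^ (2 * n / 3) := by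
    calc n * centralBinom n ≤ n * (2 * n * ((2 * n) ^ Nat.sqrt (2 * n) * 4 ^ (2 * n / 3))) :=
          Nat.mul_le_mul_left n H3
      _ = 2 * n ^ 2 * (2 * n) ^ Nat.sqrt (2 * n) * 4 ^ (2 * n / 3) := by ring
  omega

end NatPart

lemma twoPrimes_step {n : ℕ} (g a b : ℕ) (ha : a.Prime) (hb : b.Prime)
    (hab : a < b) (hga : g < a) (hcov : b ≤ 2 * g)
    (H : n < g → TwoPrimes n) (hn : n < a) : TwoPrimes n := by
  rcases lt_or_ge n g with h | h
  · exact H h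
  · exact ⟨a, b, ha, hb, hn, hab, hcov.trans (by omega)⟩

lemma twoPrimes_small {n : ℕ} (h11 : 11 ≤ n) (h : n < 521) : TwoPrimes n := by
  have base : n < 11 → TwoPrimes n := fun h' => absurd h' (by omega)
  have s13 : n < 13 → TwoPrimes n := fun hn =>
    twoPrimes_step 11 13 17 (by norm_num) (by norm_num) (by norm_num) (by norm_num)
      (by norm_num) base hn
  have s19 : n < 19 → TwoPrimes n := fun hn =>
    twoPrimes_step 13 19 23 (by norm_num) (by norm_num) (by norm_num) (by norm_num)
      (by norm_num) s13 hn
  have s23 : n < 23 → TwoPrimes n := fun hn =>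
    twoPrimes_step 19 23 29 (by norm_num) (by norm_num) (by norm_num) (by norm_num)
      (by norm_num) s19 hn
  have s37 : n < 37 → TwoPrimes n := fun hn =>
    twoPrimes_step 23 37 41 (by norm_num) (by norm_num) (by norm_num) (by norm_num)
      (by norm_num) s23 hn
  have s43 : n < 43 → TwoPrimes n := fun hn =>
    twoPrimes_step 37 43 47 (by norm_num) (by norm_num) (by norm_num) (by norm_num)
      (by norm_num) s37 hn
  have s73 : n < 73 → TwoPrimes n := fun hn =>
    twoPrimes_step 43 73 79 (by norm_num) (by norm_num) (by norm_num) (by norm_num)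
      (by norm_num) s43 hn
  have s83 : n < 83 → TwoPrimes n := fun hn =>
    twoPrimes_step 73 83 89 (by norm_num) (by norm_num) (by norm_num) (by norm_num)
      (by norm_num) s73 hn
  have s139 : n < 139 → TwoPrimes n := fun hn =>
    twoPrimes_step 83 139 149 (by norm_num) (by norm_num) (by norm_num) (by norm_num)
      (by norm_num) s83 hn
  have s163 : n < 163 → TwoPrimes n := fun hn =>
    twoPrimes_step 139 163 167 (by norm_num) (by norm_num) (by norm_num) (by norm_num)
      (by norm_num) s139 hn
  have s277 : n < 277 → TwoPrimes n := fun hn =>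
    twoPrimes_step 163 277 281 (by norm_num) (by norm_num) (by norm_num) (by norm_num)
      (by norm_num) s163 hn
  have s317 : n < 317 → TwoPrimes n := fun hn =>
    twoPrimes_step 277 317 331 (by norm_num) (by norm_num) (by norm_num) (by norm_num)
      (by norm_num) s277 hn
  have s521 : n < 521 → TwoPrimes n := fun hn =>
    twoPrimes_step 317 521 631 (by norm_num) (by norm_num) (by norm_num) (by norm_num)
      (by norm_num) s317 hn
  exact s521 h

lemma goodPair {n : ℕ} (hn : 2 ≤ n) :
    ∃ p q : ℕ, p.Prime ∧ q.Prime ∧ n < p ∧ p < q ∧ p * q < n * (p + q + 1) := by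
  rcases lt_or_ge n 11 with hsmall | hbig
  · interval_cases n
    · exact ⟨3, 5, by norm_num, by norm_num, by norm_num, by norm_num, by norm_num⟩
    · exact ⟨5, 7, by norm_num, by norm_num, by norm_num, by norm_num, by norm_num⟩
    · exact ⟨5, 7, by norm_num, by norm_num, by norm_num, by norm_num, by norm_num⟩
    · exact ⟨7, 11, by norm_num, by norm_num, by norm_num, by norm_num, by norm_num⟩
    · exact ⟨7, 11, by norm_num, by norm_num, by norm_num, by norm_num, by norm_num⟩
    · exact ⟨11, 13, by norm_num, by norm_num, by norm_num, by norm_num, by norm_num⟩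
    · exact ⟨11, 13, by norm_num, by norm_num, by norm_num, by norm_num, by norm_num⟩
    · exact ⟨11, 13, by norm_num, by norm_num, by norm_num, by norm_num, by norm_num⟩
    · exact ⟨11, 13, by norm_num, by norm_num, by norm_num, by norm_num, by norm_num⟩
  · have h2 : TwoPrimes n := by
      rcases lt_or_ge n 521 with h | h
      · exact twoPrimes_small hbig h
      · exact twoPrimes_eventually (by omega)
    obtain ⟨p, q, hp, hq, hnp, hpq, hq2n⟩ := h2
    refine ⟨p, q, hp, hq, hnp, hpq, ?_⟩
    nlinarith [hnp, hpq, hq2n]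

end AuxPAN

set_option maxHeartbeats 1000000 in
/-- Deficient sequence completion: if `m ≥ 2` is deficient with largest prime
factor `P` and `c(m) ≥ P`, then there are primes `P < p < q` with `m·p`
deficient and `m·p·q` abundant; if moreover `m` is squarefree, `m·p·q` is
primitive abundant. -/
theorem stmt14 (m P : ℕ) (hm : 2 ≤ m) (hdef : Deficient m)
    (hP : P.Prime) (hPdvd : P ∣ m) (hPmax : ∀ q : ℕ, q.Prime → q ∣ m → q ≤ P)
    (hc : (P : ℚ) ≤ center m) :
    ∃ p q : ℕ, p.Prime ∧ q.Prime ∧ P < p ∧ p < q ∧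
      Deficient (m * p) ∧ Abundant (m * p * q) ∧
      (Squarefree m → PrimitiveAbundant (m * p * q)) := by
  have hm0 : m ≠ 0 := by omega
  set s := sigma1 m with hs
  have hs2m : s < 2 * m := hdef
  set d := 2 * m - s with hdd
  have hsd : s + d = 2 * m := by omega
  have hdpos : 0 < d := by omega
  have hPd : P * d ≤ s := by
    have hdq : (0 : ℚ) < (d : ℚ) := by exact_mod_cast hdpos
    have hcast : 2 * (m : ℚ) - (s : ℚ) = (d : ℚ) := by
      rw [hdd]; push_cast [Nat.cast_sub hs2m.le]; ring
    rw [center, hcast] at hc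
    have := (le_div_iff₀ hdq).mp hc
    exact_mod_cast this
  set n := s / d with hn
  have hPn : P ≤ n := (Nat.le_div_iff_mul_le hdpos).mpr hPd
  have hn2 : 2 ≤ n := le_trans hP.two_le hPn
  obtain ⟨p, q, hp, hq, hnp, hpq, hineq⟩ := goodPair hn2
  have hdn_s : d * n ≤ s := by
    rw [hn, mul_comm]; exact Nat.div_mul_le_self s d
  have hs_lt : s < d * (n + 1) := by
    rw [Nat.mul_succ]
    have h1 : d * n + s % d = s := by rw [hn]; exact Nat.div_add_mod s d
    have h2 : s % d < d := Nat.mod_lt s hdpos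
    omega
  have hsdp : s < d * p := lt_of_lt_of_le hs_lt (Nat.mul_le_mul_left d hnp)
  have hPp : P < p := lt_of_le_of_lt hPn hnp
  have hpm : ¬ p ∣ m := fun h => absurd (hPmax p hp h) (by omega)
  have hqm : ¬ q ∣ m := fun h => absurd (hPmax q hq h) (by omega)
  have hqmp : ¬ q ∣ m * p := by
    intro h
    rcases (Nat.Prime.dvd_mul hq).mp h with h' | h'
    · exact hqm h'
    · exact absurd ((Nat.prime_dvd_prime_iff_eq hq hp).mp h') (by omega)
  have hcop_mp : Nat.Coprime m p := ((hp.coprime_iff_not_dvd).mpr hpm).symm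
  have hsig_mp : sigma1 (m * p) = s * (p + 1) := by
    rw [sigma1_mul hcop_mp, sigma1_prime hp, hs]
  have hdef_mp : Deficient (m * p) := by
    show sigma1 (m * p) < 2 * (m * p)
    rw [hsig_mp]
    have h2mp : 2 * (m * p) = s * p + d * p := by
      calc 2 * (m * p) = (2 * m) * p := by ring
        _ = (s + d) * p := by rw [hsd]
        _ = s * p + d * p := by ring
    rw [h2mp]
    calc s * (p + 1) = s * p + s := by ring
      _ < s * p + d * p := Nat.add_lt_add_left hsdp _
  have hcop_mpq : Nat.Coprime (m * p) q := ((hq.coprime_iff_not_dvd).mpr hqmp).symm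
  have hsig_mpq : sigma1 (m * p * q) = s * (p + 1) * (q + 1) := by
    rw [sigma1_mul hcop_mpq, hsig_mp, sigma1_prime hq]
  have habun : Abundant (m * p * q) := by
    show 2 * (m * p * q) < sigma1 (m * p * q)
    rw [hsig_mpq]
    have e1 : 2 * (m * p * q) = s * (p * q) + d * (p * q) := by
      calc 2 * (m * p * q) = (2 * m) * (p * q) := by ring
        _ = (s + d) * (p * q) := by rw [hsd]
        _ = s * (p * q) + d * (p * q) := by ring
    have e2 : s * (p + 1) * (q + 1) = s * (p * q) + s * (p + q + 1) := by ring
    rw [e1, e2]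
    apply Nat.add_lt_add_left
    calc d * (p * q) < d * (n * (p + q + 1)) := by
          exact mul_lt_mul_of_pos_left hineq hdpos
      _ = (d * n) * (p + q + 1) := by ring
      _ ≤ s * (p + q + 1) := Nat.mul_le_mul_right _ hdn_s
  refine ⟨p, q, hp, hq, hPp, hpq, hdef_mp, habun, ?_⟩
  intro hsf
  refine ⟨habun, ?_⟩
  intro t ht
  rw [Nat.mem_properDivisors] at ht
  obtain ⟨htdvd, htlt⟩ := ht
  have hp0 : p ≠ 0 := hp.pos.ne'
  have hq0 : q ≠ 0 := hq.pos.ne'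
  have hmp0 : m * p ≠ 0 := mul_ne_zero hm0 hp0
  by_cases hqt : q ∣ t
  · obtain ⟨e, rfl⟩ := hqt
    have he_dvd : e ∣ m * p := by
      have h' : q * e ∣ q * (m * p) := by
        rw [mul_comm q (m * p)]; exact htdvd
      exact (mul_dvd_mul_iff_left (a := q) hq0).mp h'
    have he0 : e ≠ 0 := by
      rintro rfl; exact hmp0 (zero_dvd_iff.mp he_dvd)
    have hene : e ≠ m * p := by
      rintro rfl
      rw [mul_comm q (m * p)] at htlt
      exact lt_irrefl _ htlt
    obtain ⟨k, hk⟩ := id he_dvd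
    have hk1 : 1 < k := by
      have hk0' : k ≠ 0 := by rintro rfl; rw [mul_zero] at hk; exact hmp0 hk
      have hk1' : k ≠ 1 := by rintro rfl; rw [mul_one] at hk; exact hene hk.symm
      omega
    set r := k.minFac with hr_def
    have hr : r.Prime := Nat.minFac_prime (by omega)
    obtain ⟨j, hj⟩ := k.minFac_dvd
    set u := e * j with hu
    have humul : u * r = m * p := by rw [hu, hk, hj]; ring
    have hu0 : u ≠ 0 := by
      intro h; rw [h, zero_mul] at humul; exact hmp0 humul.symm
    have hj0 : j ≠ 0 := by rintro rfl; simp [hu] at hu0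
    have hrmp : r ∣ m * p := humul ▸ dvd_mul_left r u
    have hrp : r ≤ p := by
      rcases (Nat.Prime.dvd_mul hr).mp hrmp with h' | h'
      · exact le_of_lt (lt_of_le_of_lt (hPmax r hr h') hPp)
      · exact le_of_eq ((Nat.prime_dvd_prime_iff_eq hr hp).mp h')
    have hrq : r < q := lt_of_le_of_lt hrp hpq
    have hsqf_mp : Squarefree (m * p) := (Nat.squarefree_mul hcop_mp).mpr ⟨hsf, hp.squarefree⟩
    have hcop_ur : Nat.Coprime u r := by
      refine ((hr.coprime_iff_not_dvd).mpr ?_).symm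
      intro hru
      have : r * r ∣ m * p := by
        rw [← humul]; exact mul_dvd_mul hru dvd_rfl
      exact hr.one_lt.ne' (Nat.isUnit_iff.mp (hsqf_mp r this))
    have hsig_u : sigma1 u * (r + 1) = sigma1 (m * p) := by
      rw [← humul, sigma1_mul hcop_ur, sigma1_prime hr]
    have hdefu : sigma1 u * (r + 1) < 2 * u * r := by
      rw [hsig_u]
      calc sigma1 (m * p) < 2 * (m * p) := hdef_mp
        _ = 2 * u * r := by rw [← humul]; ring
    have h1 : sigma1 e * u ≤ e * sigma1 u := by
      calc sigma1 e * u = (sigma1 e * j) * e := by rw [hu]; ring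
        _ ≤ sigma1 (e * j) * e := Nat.mul_le_mul_right _ (sigma1_mul_le he0 hj0)
        _ = e * sigma1 u := by rw [hu]; ring
    have hqe : ¬ q ∣ e := fun h => hqmp (h.trans he_dvd)
    have hcop_eq : Nat.Coprime e q := ((hq.coprime_iff_not_dvd).mpr hqe).symm
    have hsig_t : sigma1 (q * e) = sigma1 e * (q + 1) := by
      rw [mul_comm q e, sigma1_mul hcop_eq, sigma1_prime hq]
    show sigma1 (q * e) < 2 * (q * e)
    rw [hsig_t]
    have hurpos : 0 < u * (r + 1) := Nat.mul_pos (Nat.pos_of_ne_zero hu0) (by omega)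
    have heqpos : 0 < e * (q + 1) := Nat.mul_pos (Nat.pos_of_ne_zero he0) (by omega)
    have key : sigma1 e * (q + 1) * (u * (r + 1)) < 2 * (q * e) * (u * (r + 1)) := by
      calc sigma1 e * (q + 1) * (u * (r + 1))
          = (sigma1 e * u) * ((q + 1) * (r + 1)) := by ring
        _ ≤ (e * sigma1 u) * ((q + 1) * (r + 1)) := Nat.mul_le_mul_right _ h1
        _ = (sigma1 u * (r + 1)) * (e * (q + 1)) := by ring
        _ < (2 * u * r) * (e * (q + 1)) := mul_lt_mul_of_pos_right hdefu heqpos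
        _ = (r * (q + 1)) * (2 * u * e) := by ring
        _ ≤ (q * (r + 1)) * (2 * u * e) := by
            refine Nat.mul_le_mul_right _ ?_
            calc r * (q + 1) = r * q + r := by ring
              _ ≤ r * q + q := Nat.add_le_add_left hrq.le _
              _ = q * (r + 1) := by ring
        _ = 2 * (q * e) * (u * (r + 1)) := by ring
    exact Nat.lt_of_mul_lt_mul_right key
  · have hcop_tq : Nat.Coprime t q := ((hq.coprime_iff_not_dvd).mpr hqt).symm
    have htmp : t ∣ m * p := (Nat.Coprime.dvd_of_dvd_mul_right hcop_tq) htdvd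
    exact deficient_of_dvd hmp0 htmp hdef_mp
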